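/- Let D be a graph database, A an automaton, and s, t two vertices of D. Let P_{s,t} be the set of walks w in D from s to t such that some word in lbl(w) is accepted by A. Then every walk of minimal length in P_{s,t} is the projection of a simple run in D×A (hence belongs to the simple-run semantics output ⟦A⟧_SR(D)). -/

import Mathlib

structure GraphDB (σ V E : Type) where
  src : E → V
  tgt : E → V
  lbl : E → Set σ

inductive GraphDB.IsWalkFrom {σ V E : Type} (D : GraphDB σ V E) : V → List E → V → Prop
  | nil (v : V) : D.IsWalkFrom v [] v
  | cons {v u t : V} {e : E} {es : List E} :
      D.src e = v → D.tgt e = u → D.IsWalkFrom u es t → D.IsWalkFrom v (e :: es) t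

/-- The list of vertices visited by a walk starting at `s` with edge list `es`. -/
def GraphDB.walkVertices {σ V E : Type} (D : GraphDB σ V E) (s : V) (es : List E) : List V :=
  s :: es.map D.tgt

/-- `w` is one of the label words of the walk with edges `es`. -/
def GraphDB.WalkLabel {σ V E : Type} (D : GraphDB σ V E) (es : List E) (w : List σ) : Prop :=
  List.Forall₂ (fun a e => a ∈ D.lbl e) w es

structure Auto (σ Q : Type) where
  Δ : Set (Q × σ × Q)
  I : Set Q
  F : Set Q

inductive Auto.IsComp {σ Q : Type} (A : Auto σ Q) : Q → List σ → Q → Prop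
  | nil (q : Q) : A.IsComp q [] q
  | cons {q q' t : Q} {a : σ} {w : List σ} :
      (q, a, q') ∈ A.Δ → A.IsComp q' w t → A.IsComp q (a :: w) t

def Auto.Accepts {σ Q : Type} (A : Auto σ Q) (w : List σ) : Prop :=
  ∃ i ∈ A.I, ∃ f ∈ A.F, A.IsComp i w f

/-- Edges of the product (run) database `D × A`. -/
def ProdEdge {σ V E Q : Type} (D : GraphDB σ V E) (A : Auto σ Q) : Type :=
  { p : E × (Q × σ × Q) // p.2 ∈ A.Δ ∧ p.2.2.1 ∈ D.lbl p.1 }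

/-- The product (run) database `D × A`. -/
def prodDB {σ V E Q : Type} (D : GraphDB σ V E) (A : Auto σ Q) :
    GraphDB σ (V × Q) (ProdEdge D A) where
  src p := (D.src p.1.1, p.1.2.1)
  tgt p := (D.tgt p.1.1, p.1.2.2.2)
  lbl p := {p.1.2.2.1}

/-- A run: a walk of `D × A` from `V × I` to `V × F`. -/
def IsRun {σ V E Q : Type} (D : GraphDB σ V E) (A : Auto σ Q)
    (p : V × Q) (es : List (ProdEdge D A)) (q : V × Q) : Prop :=
  (prodDB D A).IsWalkFrom p es q ∧ p.2 ∈ A.I ∧ q.2 ∈ A.F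

/-- A walk is simple if it repeats no vertex. -/
def IsSimple {σ V E : Type} (D : GraphDB σ V E) (s : V) (es : List E) : Prop :=
  (D.walkVertices s es).Nodup

/-- Projection of product edges to edges of `D`. -/
def projEdges {σ V E Q : Type} {D : GraphDB σ V E} {A : Auto σ Q}
    (es : List (ProdEdge D A)) : List E := es.map (fun p => p.1.1)

/-- Membership in the simple-run semantics `⟦A⟧_SR(D)`:
the walk `(s, es, t)` is the projection of some simple run of `D × A`. -/
def InSR {σ V E Q : Type} (D : GraphDB σ V E) (A : Auto σ Q)
    (s : V) (es : List E) (t : V) : Prop :=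
  ∃ (i f : Q) (r : List (ProdEdge D A)),
    IsRun D A (s, i) r (t, f) ∧ IsSimple (prodDB D A) (s, i) r ∧ projEdges r = es

/-- From a vertex appearing in a walk, there is a (not longer) walk to the end. -/
lemma walk_suffix {σ V E : Type} (D : GraphDB σ V E) {v t x : V} {es : List E}
    (hw : D.IsWalkFrom v es t) (hx : x ∈ D.walkVertices v es) :
    ∃ es', D.IsWalkFrom x es' t ∧ es'.length ≤ es.length := by
  induction hw with
  | nil v =>
      simp [GraphDB.walkVertices] at hx
      subst hx
      exact ⟨[], GraphDB.IsWalkFrom.nil x, le_refl _⟩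
  | cons hsrc htgt hw ih =>
      rename_i v u t e es
      rcases List.mem_cons.mp hx with h | h
      · subst h
        exact ⟨e :: es, GraphDB.IsWalkFrom.cons hsrc htgt hw, le_refl _⟩
      · have hx' : x ∈ D.walkVertices u es := by
          simpa [GraphDB.walkVertices, htgt] using h
        obtain ⟨es', h1, h2⟩ := ih hx'
        exact ⟨es', h1, le_trans h2 (Nat.le_succ _)⟩

/-- Shortcut lemma: a non-simple walk admits a strictly shorter walk. -/
lemma walk_shortcut {σ V E : Type} (D : GraphDB σ V E) {v t : V} {es : List E}
    (hw : D.IsWalkFrom v es t) (hns : ¬ (D.walkVertices v es).Nodup) :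
    ∃ es', D.IsWalkFrom v es' t ∧ es'.length < es.length := by
  induction hw with
  | nil v => simp [GraphDB.walkVertices] at hns
  | cons hsrc htgt hw ih =>
      rename_i v u t e es
      have hvert : D.walkVertices v (e :: es) = v :: D.walkVertices u es := by
        simp [GraphDB.walkVertices, htgt]
      rw [hvert, List.nodup_cons] at hns
      push_neg at hns
      by_cases hmem : v ∈ D.walkVertices u es
      · obtain ⟨es', h1, h2⟩ := walk_suffix D hw hmem
        exact ⟨es', h1, lt_of_le_of_lt h2 (Nat.lt_succ_self _)⟩
      · obtain ⟨es', h1, h2⟩ := ih (hns hmem)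
        exact ⟨e :: es', GraphDB.IsWalkFrom.cons hsrc htgt h1, Nat.succ_lt_succ h2⟩

/-- Build a run over a labeled walk with an accepting computation. -/
lemma build_run {σ V E Q : Type} (D : GraphDB σ V E) (A : Auto σ Q)
    {es : List E} {w : List σ} (hlbl : D.WalkLabel es w) :
    ∀ {s t : V} {i f : Q}, D.IsWalkFrom s es t → A.IsComp i w f →
    ∃ r : List (ProdEdge D A), (prodDB D A).IsWalkFrom (s, i) r (t, f) ∧ projEdges r = es := by
  induction hlbl with
  | nil =>
      intro s t i f hw hc
      cases hw; cases hc
      exact ⟨[], GraphDB.IsWalkFrom.nil _, rfl⟩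
  | cons ha hlbl ih =>
      rename_i a e w es
      intro s t i f hw hc
      cases hw with
      | cons hsrc htgt hw =>
        rename_i u
        cases hc with
        | cons hΔ hc =>
          rename_i q'
          obtain ⟨r, hr1, hr2⟩ := ih hw hc
          refine ⟨⟨(e, (i, a, q')), hΔ, ha⟩ :: r, ?_, ?_⟩
          · exact GraphDB.IsWalkFrom.cons (by simp [prodDB, hsrc]) (by simp [prodDB, htgt]) hr1
          · simp [projEdges] at hr2 ⊢; exact congrArg (e :: ·) hr2

/-- Project a run to a walk of `D` together with an accepted label word. -/
lemma proj_run {σ V E Q : Type} (D : GraphDB σ V E) (A : Auto σ Q)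
    {p q : V × Q} {r : List (ProdEdge D A)}
    (hr : (prodDB D A).IsWalkFrom p r q) :
    D.IsWalkFrom p.1 (projEdges r) q.1 ∧
      ∃ w, D.WalkLabel (projEdges r) w ∧ A.IsComp p.2 w q.2 := by
  induction hr with
  | nil v =>
      exact ⟨GraphDB.IsWalkFrom.nil _, [], List.Forall₂.nil, Auto.IsComp.nil _⟩
  | cons hsrc htgt hw ih =>
      rename_i v u t pe pes
      subst hsrc; subst htgt
      obtain ⟨hw1, w, hw2, hw3⟩ := ih
      exact ⟨GraphDB.IsWalkFrom.cons rfl rfl hw1, pe.1.2.2.1 :: w,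
        List.Forall₂.cons pe.2.2 hw2, Auto.IsComp.cons pe.2.1 hw3⟩

/-- every walk of minimal length among the walks from `s` to `t`
matching `A` belongs to the simple-run semantics output. -/
theorem stmt_2 {σ V E Q : Type} (D : GraphDB σ V E) (A : Auto σ Q)
    (s t : V) (es : List E)
    (hw : D.IsWalkFrom s es t)
    (hm : ∃ w : List σ, D.WalkLabel es w ∧ A.Accepts w)
    (hmin : ∀ es' : List E, D.IsWalkFrom s es' t →
      (∃ w : List σ, D.WalkLabel es' w ∧ A.Accepts w) → es.length ≤ es'.length) :
    InSR D A s es t := by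
  obtain ⟨w, hlbl, i, hi, f, hf, hc⟩ := hm
  obtain ⟨r, hr, hproj⟩ := build_run D A hlbl hw hc
  by_cases hs : IsSimple (prodDB D A) (s, i) r
  · exact ⟨i, f, r, ⟨hr, hi, hf⟩, hs, hproj⟩
  · exfalso
    obtain ⟨r', hr', hlen⟩ := walk_shortcut _ hr hs
    obtain ⟨hw', w', hl', hc'⟩ := proj_run D A hr'
    have hmin' := hmin (projEdges r') hw' ⟨w', hl', i, hi, f, hf, hc'⟩
    have h1 : es.length ≤ r'.length := by simpa [projEdges] using hmin'
    have h2 : r.length = es.length := by rw [← hproj]; simp [projEdges]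
    omega
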